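/- Let S be a finite p-group, F a saturated fusion system on S, and P ≤ S an F-centric subgroup. Then every F-morphism φ : P → S has a nonextendable extension that is unique up to precomposition with conjugation by elements of Z(P): if ψ₁ : Q₁ → S and ψ₂ : Q₂ → S are F-morphisms extending φ (P ≤ Q_i, ψ_i|_P = φ) and neither ψ₁ nor ψ₂ extends to any strictly larger subgroup, then Q₁ = Q₂ and ψ₂ = ψ₁ ∘ c_z for some z ∈ Z(P). -/

import Mathlib

/-- A fusion system on a group `S`, encoded via partial maps: `Mor P f` asserts that the
restriction of `f : S → S` to the subgroup `P ≤ S` is a morphism of the fusion system,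
i.e. an injective group homomorphism from `P` into `S`. -/
structure FusionSystem (S : Type) [Group S] where
  /-- `Mor P f`: the restriction of `f` to `P` is a morphism `P → S` of the fusion system. -/
  Mor : Subgroup S → (S → S) → Prop
  mul_on : ∀ {P : Subgroup S} {f : S → S}, Mor P f → ∀ x ∈ P, ∀ y ∈ P, f (x * y) = f x * f y
  inj_on : ∀ {P : Subgroup S} {f : S → S}, Mor P f → Set.InjOn f (P : Set S)
  /-- Every homomorphism induced by conjugation in `S` is a morphism. -/
  conj_mem : ∀ (P : Subgroup S) (s : S), Mor P fun x => s * x * s⁻¹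
  /-- Morphisms are closed under composition. -/
  comp_mem : ∀ {P Q : Subgroup S} {f g : S → S}, Mor P f → Mor Q g →
      (∀ x ∈ P, f x ∈ Q) → Mor P (g ∘ f)
  /-- The inverse of the isomorphism onto the image is again a morphism. -/
  inv_mem : ∀ {P : Subgroup S} {f : S → S} (Q : Subgroup S), Mor P f →
      (Q : Set S) = f '' (P : Set S) → ∃ g : S → S, Mor Q g ∧ ∀ x ∈ P, g (f x) = x
  /-- Morphisms restrict to subgroups. -/
  restrict_mem : ∀ {P : Subgroup S} {f : S → S} (Q : Subgroup S), Q ≤ P → Mor P f → Mor Q f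

namespace FusionSystem

variable {S : Type} [Group S] (F : FusionSystem S)

/-- Two subgroups are `F`-conjugate if some morphism of `F` maps one onto the other. -/
def IsConj (P Q : Subgroup S) : Prop :=
  ∃ f : S → S, F.Mor P f ∧ f '' (P : Set S) = (Q : Set S)

/-- `P` is fully `F`-normalized: its normalizer has maximal order in its `F`-class. -/
def FullyNormalized (P : Subgroup S) : Prop :=
  ∀ Q : Subgroup S, F.IsConj P Q → Nat.card (Subgroup.normalizer (Q : Set S)) ≤ Nat.card (Subgroup.normalizer (P : Set S))

/-- `P` is fully `F`-centralized: its centralizer has maximal order in its `F`-class. -/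
def FullyCentralized (P : Subgroup S) : Prop :=
  ∀ Q : Subgroup S, F.IsConj P Q →
    Nat.card (Subgroup.centralizer (Q : Set S)) ≤ Nat.card (Subgroup.centralizer (P : Set S))

/-- `P` is `F`-centric: every `F`-conjugate of `P` contains its own `S`-centralizer. -/
def Centric (P : Subgroup S) : Prop :=
  ∀ Q : Subgroup S, F.IsConj P Q → (Subgroup.centralizer (Q : Set S) : Set S) ⊆ (Q : Set S)

/-- Saturation of a fusion system at the prime `p`: (I) fully normalized subgroups are fully
centralized and their `S`-automorphisms have index prime to `p` among their
`F`-automorphisms (the Sylow axiom); (II) the extension axiom: a morphism with fully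
centralized image extends to its extender `N_φ`. -/
def Saturated (p : ℕ) : Prop :=
  (∀ P : Subgroup S, F.FullyNormalized P →
    F.FullyCentralized P ∧
      ¬ p ∣ (Set.ncard {g : ↥P → S | ∃ f : S → S, F.Mor P f ∧
              f '' (P : Set S) = (P : Set S) ∧ ∀ x : ↥P, g x = f (x : S)} /
        Set.ncard {g : ↥P → S | ∃ s ∈ Subgroup.normalizer (P : Set S), ∀ x : ↥P, g x = s * (x : S) * s⁻¹})) ∧
  (∀ (P : Subgroup S) (f : S → S), F.Mor P f →
    (∀ Q : Subgroup S, (Q : Set S) = f '' (P : Set S) → F.FullyCentralized Q) →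
    ∃ (R : Subgroup S) (g : S → S), F.Mor R g ∧ P ≤ R ∧ (∀ x ∈ P, g x = f x) ∧
      (R : Set S) = {x : S | x ∈ Subgroup.normalizer (P : Set S) ∧
        ∃ y : S, ∀ q ∈ P, f (x * q * x⁻¹) = y * f q * y⁻¹})

/-- A morphism of `F` defined on `P` is nonextendable if it admits no extension to a strictly
larger subgroup. -/
def Nonextendable (P : Subgroup S) (f : S → S) : Prop :=
  F.Mor P f ∧ ∀ (R : Subgroup S) (g : S → S), P ≤ R → F.Mor R g →
    (∀ x ∈ P, g x = f x) → R = P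

end FusionSystem

namespace FusionSystem

variable {S : Type} [Group S] (F : FusionSystem S)

lemma mor_one {P : Subgroup S} {f : S → S} (h : F.Mor P f) : f 1 = 1 := by
  have h1 := F.mul_on h 1 P.one_mem 1 P.one_mem
  rw [one_mul] at h1
  exact (mul_eq_left.mp h1.symm)

lemma mor_inv {P : Subgroup S} {f : S → S} (h : F.Mor P f) {x : S} (hx : x ∈ P) :
    f x⁻¹ = (f x)⁻¹ := by
  have h1 := F.mul_on h x⁻¹ (P.inv_mem hx) x hx
  rw [inv_mul_cancel, F.mor_one h] at h1
  exact eq_inv_of_mul_eq_one_left h1.symm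

lemma mor_id (P : Subgroup S) : F.Mor P (fun x => x) := by
  simpa using F.conj_mem P 1

/-- Image of a subgroup under a morphism, as a subgroup. -/
def morImage {P : Subgroup S} {f : S → S} (h : F.Mor P f) : Subgroup S where
  carrier := f '' (P : Set S)
  one_mem' := ⟨1, P.one_mem, F.mor_one h⟩
  mul_mem' := by
    rintro _ _ ⟨a, ha, rfl⟩ ⟨b, hb, rfl⟩
    exact ⟨a * b, P.mul_mem ha hb, F.mul_on h a ha b hb⟩
  inv_mem' := by
    rintro _ ⟨a, ha, rfl⟩
    exact ⟨a⁻¹, P.inv_mem ha, F.mor_inv h ha⟩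

@[simp] lemma coe_morImage {P : Subgroup S} {f : S → S} (h : F.Mor P f) :
    (F.morImage h : Set S) = f '' (P : Set S) := rfl

lemma isConj_refl (P : Subgroup S) : F.IsConj P P :=
  ⟨fun x => x, F.mor_id P, Set.image_id _⟩

lemma isConj_trans {P Q R : Subgroup S} (h1 : F.IsConj P Q) (h2 : F.IsConj Q R) :
    F.IsConj P R := by
  obtain ⟨f, hf, hfi⟩ := h1
  obtain ⟨g, hg, hgi⟩ := h2
  refine ⟨g ∘ f, F.comp_mem hf hg ?_, ?_⟩
  · intro x hx
    have : f x ∈ f '' (P : Set S) := ⟨x, hx, rfl⟩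
    rw [hfi] at this
    exact this
  · rw [Set.image_comp, hfi, hgi]

lemma isConj_symm {P Q : Subgroup S} (h : F.IsConj P Q) : F.IsConj Q P := by
  obtain ⟨f, hf, hfi⟩ := h
  obtain ⟨g, hg, hgf⟩ := F.inv_mem Q hf hfi.symm
  refine ⟨g, hg, ?_⟩
  ext y
  constructor
  · rintro ⟨q, hq, rfl⟩
    rw [← hfi] at hq
    obtain ⟨x, hx, rfl⟩ := hq
    rw [hgf x hx]
    exact hx
  · intro hy
    refine ⟨f y, ?_, hgf y hy⟩
    rw [← hfi]
    exact ⟨y, hy, rfl⟩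

lemma centric_of_isConj {P Q : Subgroup S} (h : F.Centric P) (hc : F.IsConj P Q) :
    F.Centric Q := fun R hR => h R (F.isConj_trans hc hR)

lemma centric_self_subset {P : Subgroup S} (h : F.Centric P) :
    (Subgroup.centralizer (P : Set S) : Set S) ⊆ (P : Set S) := h P (F.isConj_refl P)

lemma centric_mono {P Q : Subgroup S} (h : F.Centric P) (hPQ : P ≤ Q) : F.Centric Q := by
  rintro Q' ⟨f, hf, him⟩
  have hfP : F.Mor P f := F.restrict_mem P hPQ hf
  have hP' : F.Centric (F.morImage hfP) := F.centric_of_isConj h ⟨f, hfP, rfl⟩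
  have hle : (F.morImage hfP : Set S) ⊆ (Q' : Set S) := by
    rw [coe_morImage, ← him]
    exact Set.image_mono hPQ
  intro x hx
  have hx' : x ∈ Subgroup.centralizer ((F.morImage hfP : Subgroup S) : Set S) :=
    Subgroup.centralizer_le hle hx
  exact hle (F.centric_self_subset hP' hx')

lemma centric_fullyCentralized {P : Subgroup S} [Finite S] (h : F.Centric P) :
    F.FullyCentralized P := by
  intro Q hQ
  obtain ⟨f, hf, him⟩ := hQ
  obtain ⟨g, hg, hgf⟩ := F.inv_mem Q hf him.symm
  have hQc : F.Centric Q := F.centric_of_isConj h ⟨f, hf, him⟩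
  have hfg : ∀ y ∈ Q, f (g y) = y := by
    intro y hy
    have hy' : y ∈ f '' (P : Set S) := by rw [him]; exact hy
    obtain ⟨x, hx, rfl⟩ := hy'
    rw [hgf x hx]
  -- the injection
  have key : ∀ c : S, c ∈ Subgroup.centralizer (Q : Set S) →
      g c ∈ Subgroup.centralizer (P : Set S) ∧ g c ∈ P := by
    intro c hc
    have hcQ : c ∈ (Q : Set S) := F.centric_self_subset hQc hc
    have hcQ' : c ∈ Q := hcQ
    obtain ⟨x, hx, rfl⟩ := (by rw [← him] at hcQ; exact hcQ : c ∈ f '' (P : Set S))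
    rw [hgf x hx]
    refine ⟨?_, hx⟩
    rw [Subgroup.mem_centralizer_iff]
    intro q hq
    have h1 : f (q * x) = f q * f x := F.mul_on hf q hq x hx
    have h2 : f (x * q) = f x * f q := F.mul_on hf x hx q hq
    have h3 : f x * f q = f q * f x := by
      have := Subgroup.mem_centralizer_iff.mp hc (f q) (by rw [← him]; exact ⟨q, hq, rfl⟩)
      exact this.symm
    have : f (q * x) = f (x * q) := by rw [h1, h2, h3]
    have := F.inj_on hf (P.mul_mem hq hx) (P.mul_mem hx hq) this
    rw [this]
  let e : ↥(Subgroup.centralizer (Q : Set S)) → ↥(Subgroup.centralizer (P : Set S)) :=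
    fun c => ⟨g c, (key c c.2).1⟩
  have he : Function.Injective e := by
    intro c₁ c₂ hcc
    have hc₁ : (c₁ : S) ∈ Q := F.centric_self_subset hQc c₁.2
    have hc₂ : (c₂ : S) ∈ Q := F.centric_self_subset hQc c₂.2
    have : g (c₁ : S) = g (c₂ : S) := congrArg Subtype.val hcc
    have : f (g (c₁ : S)) = f (g (c₂ : S)) := congrArg f this
    rw [hfg _ hc₁, hfg _ hc₂] at this
    exact Subtype.ext this
  exact Nat.card_le_card_of_injective e he

lemma fc_images {P Q : Subgroup S} {ψ : S → S} [Finite S] (hP : F.Centric P) (hPQ : P ≤ Q)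
    (hψ : F.Mor Q ψ) : ∀ Q' : Subgroup S, (Q' : Set S) = ψ '' (Q : Set S) →
      F.FullyCentralized Q' := fun Q' hq =>
  F.centric_fullyCentralized (F.centric_of_isConj (F.centric_mono hP hPQ) ⟨ψ, hψ, hq.symm⟩)

end FusionSystem
namespace FusionSystem

variable {S : Type} [Group S] (F : FusionSystem S)

lemma card_lt_of_lt {A B : Subgroup S} [Finite S] (h : A < B) :
    Nat.card ↥A < Nat.card ↥B := by
  have h1 : (A : Set S) ⊂ (B : Set S) := by exact_mod_cast h
  have := Set.ncard_lt_ncard h1 (B : Set S).toFinite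
  simpa [← Nat.card_coe_set_eq] using this

lemma lt_inf_normalizer {p : ℕ} [Finite S] (hp : p.Prime) (hS : IsPGroup p S)
    {A B : Subgroup S} (h : A < B) : A < B ⊓ (Subgroup.normalizer (A : Set S)) := by
  haveI := Fact.mk hp
  have hB : IsPGroup p ↥B := hS.to_subgroup B
  haveI : Group.IsNilpotent ↥B := hB.isNilpotent
  have hnc := normalizerCondition_of_isNilpotent (G := ↥B)
  set A' := A.subgroupOf B with hA'
  have hA'top : A' < ⊤ := by
    obtain ⟨b, hbB, hbA⟩ := SetLike.exists_of_lt h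
    refine lt_of_le_of_ne le_top (fun hEq => hbA ?_)
    have : (⟨b, hbB⟩ : ↥B) ∈ A' := hEq ▸ Subgroup.mem_top _
    exact (Subgroup.mem_subgroupOf).mp this
  have hlt := hnc A' hA'top
  obtain ⟨x, hxN, hxA'⟩ := SetLike.exists_of_lt hlt
  have hxB : (x : S) ∈ B := x.2
  have hxnorm : (x : S) ∈ (Subgroup.normalizer (A : Set S)) := by
    rw [Subgroup.mem_normalizer_iff]
    intro a
    constructor
    · intro haA
      have haB : a ∈ B := h.le haA
      have : (⟨a, haB⟩ : ↥B) ∈ A' := Subgroup.mem_subgroupOf.mpr haA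
      have h2 := (Subgroup.mem_normalizer_iff.mp hxN ⟨a, haB⟩).mp this
      exact Subgroup.mem_subgroupOf.mp h2
    · intro haA
      have hxaB : (x : S) * a * (x : S)⁻¹ ∈ B := h.le haA
      have haB : a ∈ B := by
        have := B.mul_mem (B.mul_mem (B.inv_mem hxB) hxaB) hxB
        simpa [mul_assoc] using this
      have : (⟨(x : S) * a * (x:S)⁻¹, hxaB⟩ : ↥B) ∈ A' := Subgroup.mem_subgroupOf.mpr haA
      have h2 : (⟨a, haB⟩ : ↥B) ∈ A' := by
        have h3 := (Subgroup.mem_normalizer_iff.mp hxN ⟨a, haB⟩).mpr ?_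
        · exact h3
        · convert this using 1
          rfl
      exact Subgroup.mem_subgroupOf.mp h2
  refine lt_of_le_of_ne (le_inf h.le Subgroup.le_normalizer) (fun hEq => ?_)
  have : (x : S) ∈ B ⊓ (Subgroup.normalizer (A : Set S)) := ⟨hxB, hxnorm⟩
  rw [← hEq] at this
  exact hxA' (Subgroup.mem_subgroupOf.mpr this)

/-- Every morphism extends to a nonextendable one. -/
lemma exists_nonext [Finite S] (Q : Subgroup S) (ψ : S → S) (h : F.Mor Q ψ) :
    ∃ (R : Subgroup S) (χ : S → S), Q ≤ R ∧ (∀ x ∈ Q, χ x = ψ x) ∧ F.Nonextendable R χ := by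
  suffices H : ∀ n (Q : Subgroup S) (ψ : S → S), F.Mor Q ψ →
      Nat.card S ≤ Nat.card ↥Q + n →
      ∃ (R : Subgroup S) (χ : S → S), Q ≤ R ∧ (∀ x ∈ Q, χ x = ψ x) ∧ F.Nonextendable R χ by
    exact H (Nat.card S) Q ψ h (Nat.le_add_left _ _)
  intro n
  induction n with
  | zero =>
    intro Q ψ h hcard
    refine ⟨Q, ψ, le_refl _, fun x _ => rfl, h, fun R g hQR hg _ => ?_⟩
    by_contra hne
    have hlt : Q < R := lt_of_le_of_ne hQR (Ne.symm hne)
    have h1 : Nat.card ↥R ≤ Nat.card S := by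
      rw [← Subgroup.card_top (G := S)]
      exact Subgroup.card_le_of_le le_top
    have := card_lt_of_lt hlt
    omega
  | succ n ih =>
    intro Q ψ h hcard
    by_cases hne : F.Nonextendable Q ψ
    · exact ⟨Q, ψ, le_refl _, fun x _ => rfl, hne⟩
    · rw [Nonextendable, not_and] at hne
      push_neg at hne
      obtain ⟨R', g', hQR', hg', hagree, hneq⟩ := hne h
      have hlt : Q < R' := lt_of_le_of_ne hQR' (Ne.symm hneq)
      have hcard' : Nat.card S ≤ Nat.card ↥R' + n := by
        have := card_lt_of_lt hlt
        omega
      obtain ⟨R, χ, hR'R, hχ, hnonext⟩ := ih R' g' hg' hcard'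
      exact ⟨R, χ, le_trans hQR' hR'R, fun x hx => (hχ x (hQR' hx)).trans (hagree x hx),
        hnonext⟩

/-- Every subgroup has a fully normalized conjugate. -/
lemma exists_fn_conj [Finite S] (U : Subgroup S) :
    ∃ (V : Subgroup S) (β : S → S), F.Mor U β ∧ β '' (U : Set S) = (V : Set S) ∧
      F.FullyNormalized V := by
  have hne : {Q | F.IsConj U Q}.Nonempty := ⟨U, F.isConj_refl U⟩
  obtain ⟨V, hV, hmax⟩ := Set.Finite.exists_maximalFor
    (fun Q : Subgroup S => Nat.card ↥(Subgroup.normalizer (Q : Set S))) _ (Set.toFinite {Q | F.IsConj U Q}) hne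
  obtain ⟨β, hβ, him⟩ := hV
  refine ⟨V, β, hβ, him, fun Q hQ => ?_⟩
  have hUQ : F.IsConj U Q := F.isConj_trans ⟨β, hβ, him⟩ hQ
  rcases le_or_gt (Nat.card ↥(Subgroup.normalizer (Q : Set S))) (Nat.card ↥(Subgroup.normalizer (V : Set S))) with h1 | h1
  · exact h1
  · exact hmax hUQ h1.le

/-- The extension axiom, applicable over a centric subgroup. -/
lemma ext_axiom [Finite S] {P Q : Subgroup S} {ψ : S → S} {p : ℕ} (hF : F.Saturated p)
    (hP : F.Centric P) (hPQ : P ≤ Q) (hψ : F.Mor Q ψ) :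
    ∃ (R : Subgroup S) (g : S → S), F.Mor R g ∧ Q ≤ R ∧ (∀ x ∈ Q, g x = ψ x) ∧
      (R : Set S) = {x : S | x ∈ (Subgroup.normalizer (Q : Set S)) ∧
        ∃ y : S, ∀ q ∈ Q, ψ (x * q * x⁻¹) = y * ψ q * y⁻¹} :=
  hF.2 Q ψ hψ (F.fc_images hP hPQ hψ)

end FusionSystem

theorem Equiv.Perm.apply_inv_self {α : Type*} (f : Equiv.Perm α) (x : α) : f (f⁻¹ x) = x :=
  Equiv.apply_symm_apply f x

namespace FusionSystem

variable {S : Type} [Group S] (F : FusionSystem S)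

/-- The permutation of `↥V` induced by a morphism mapping `V` into itself. -/
noncomputable def morPerm [Finite S] {V : Subgroup S} {f : S → S} (hf : F.Mor V f)
    (hmap : ∀ x ∈ V, f x ∈ V) : Equiv.Perm ↥V :=
  Equiv.ofBijective (fun x => ⟨f x, hmap x x.2⟩)
    (Finite.injective_iff_bijective.mp (fun a b hab =>
      Subtype.ext (F.inj_on hf a.2 b.2 (congrArg Subtype.val hab))))

@[simp] lemma morPerm_apply [Finite S] {V : Subgroup S} {f : S → S} (hf : F.Mor V f)
    (hmap : ∀ x ∈ V, f x ∈ V) (x : ↥V) : (F.morPerm hf hmap x : S) = f x := rfl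

/-- `Aut_F(V)` as a subgroup of the permutation group of `V`. -/
noncomputable def autF [Finite S] (V : Subgroup S) : Subgroup (Equiv.Perm ↥V) where
  carrier := {π | ∃ f : S → S, F.Mor V f ∧ ∀ x : ↥V, (π x : S) = f x}
  one_mem' := ⟨fun x => x, F.mor_id V, fun _ => rfl⟩
  mul_mem' := by
    rintro π₁ π₂ ⟨f₁, h₁, e₁⟩ ⟨f₂, h₂, e₂⟩
    refine ⟨f₁ ∘ f₂, F.comp_mem h₂ h₁ (fun x hx => ?_), fun x => ?_⟩
    · rw [← e₂ ⟨x, hx⟩]; exact (π₂ ⟨x, hx⟩).2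
    · show ((π₁ (π₂ x) : ↥V) : S) = f₁ (f₂ (x : S))
      rw [e₁ (π₂ x), e₂ x]
  inv_mem' := by
    rintro π ⟨f, hfm, e⟩
    have himg : (V : Set S) = f '' (V : Set S) := by
      ext y
      constructor
      · intro hy
        refine ⟨(π⁻¹ ⟨y, hy⟩ : ↥V), (π⁻¹ ⟨y, hy⟩).2, ?_⟩
        rw [← e (π⁻¹ ⟨y, hy⟩), Equiv.Perm.apply_inv_self]
      · rintro ⟨x, hx, rfl⟩
        rw [← e ⟨x, hx⟩]
        exact (π ⟨x, hx⟩).2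
    obtain ⟨g, hg, hgf⟩ := F.inv_mem V hfm himg
    refine ⟨g, hg, fun x => ?_⟩
    have h1 : (x : S) = f ((π⁻¹ x : ↥V) : S) := by
      rw [← e (π⁻¹ x), Equiv.Perm.apply_inv_self]
    rw [h1, hgf _ (π⁻¹ x).2]

/-- The permutation of `↥V` induced by conjugation by a normalizer element. -/
noncomputable def conjPerm [Finite S] (V : Subgroup S) (s : S) (hs : s ∈ (Subgroup.normalizer (V : Set S))) :
    Equiv.Perm ↥V :=
  Equiv.ofBijective (fun x => ⟨s * x * s⁻¹, (Subgroup.mem_normalizer_iff.mp hs x).mp x.2⟩)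
    (Finite.injective_iff_bijective.mp (fun a b hab => by
      have h1 : s * (a : S) * s⁻¹ = s * (b : S) * s⁻¹ := congrArg Subtype.val hab
      have h2 : (a : S) = (b : S) := by
        have := mul_left_cancel (mul_right_cancel h1)
        exact this
      exact Subtype.ext h2))

@[simp] lemma conjPerm_apply [Finite S] (V : Subgroup S) (s : S) (hs : s ∈ (Subgroup.normalizer (V : Set S)))
    (x : ↥V) : (conjPerm V s hs x : S) = s * x * s⁻¹ := rfl

/-- `Aut_S(V)` as a subgroup of the permutation group of `V`. -/
noncomputable def autS (V : Subgroup S) : Subgroup (Equiv.Perm ↥V) where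
  carrier := {π | ∃ s ∈ (Subgroup.normalizer (V : Set S)), ∀ x : ↥V, (π x : S) = s * x * s⁻¹}
  one_mem' := ⟨1, one_mem _, fun x => by simp⟩
  mul_mem' := by
    rintro π₁ π₂ ⟨s₁, hs₁, e₁⟩ ⟨s₂, hs₂, e₂⟩
    refine ⟨s₁ * s₂, (Subgroup.normalizer (V : Set S)).mul_mem hs₁ hs₂, fun x => ?_⟩
    show ((π₁ (π₂ x) : ↥V) : S) = (s₁ * s₂) * x * (s₁ * s₂)⁻¹
    rw [e₁ (π₂ x), e₂ x]
    group
  inv_mem' := by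
    rintro π ⟨s, hs, e⟩
    refine ⟨s⁻¹, (Subgroup.normalizer (V : Set S)).inv_mem hs, fun x => ?_⟩
    have h1 : (x : S) = s * ((π⁻¹ x : ↥V) : S) * s⁻¹ := by
      rw [← e (π⁻¹ x), Equiv.Perm.apply_inv_self]
    rw [h1]
    group

lemma autS_le_autF [Finite S] (V : Subgroup S) : autS V ≤ F.autF V := by
  rintro π ⟨s, _, e⟩
  exact ⟨fun x => s * x * s⁻¹, F.conj_mem V s, e⟩

lemma card_autF [Finite S] (V : Subgroup S) :
    Set.ncard {g : ↥V → S | ∃ f : S → S, F.Mor V f ∧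
      f '' (V : Set S) = (V : Set S) ∧ ∀ x : ↥V, g x = f (x : S)} = Nat.card ↥(F.autF V) := by
  rw [← Nat.card_coe_set_eq]
  apply Nat.card_congr
  symm
  refine Equiv.ofBijective (fun π => ⟨fun x => ((π : Equiv.Perm ↥V) x : S), ?_⟩) ⟨?_, ?_⟩
  · obtain ⟨f, hf, e⟩ := π.2
    have himg : f '' (V : Set S) = (V : Set S) := by
      ext y
      constructor
      · rintro ⟨x, hx, rfl⟩
        rw [← e ⟨x, hx⟩]; exact ((π : Equiv.Perm ↥V) ⟨x, hx⟩).2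
      · intro hy
        refine ⟨((π : Equiv.Perm ↥V)⁻¹ ⟨y, hy⟩ : ↥V), ((π : Equiv.Perm ↥V)⁻¹ ⟨y, hy⟩).2, ?_⟩
        rw [← e _, Equiv.Perm.apply_inv_self]
    exact ⟨f, hf, himg, fun x => e x⟩
  · intro π₁ π₂ h
    have h2 := congrArg Subtype.val h
    refine Subtype.ext (Equiv.ext fun x => Subtype.ext ?_)
    exact congrFun h2 x
  · rintro ⟨g, f, hf, himg, hg⟩
    have hmap : ∀ x ∈ V, f x ∈ V := by
      intro x hx
      have : f x ∈ f '' (V : Set S) := ⟨x, hx, rfl⟩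
      rw [himg] at this; exact this
    refine ⟨⟨F.morPerm hf hmap, ⟨f, hf, fun x => rfl⟩⟩, ?_⟩
    exact Subtype.ext (funext fun x => ((hg x).symm : _))

lemma card_autS [Finite S] (V : Subgroup S) :
    Set.ncard {g : ↥V → S | ∃ s ∈ (Subgroup.normalizer (V : Set S)), ∀ x : ↥V, g x = s * (x : S) * s⁻¹} =
      Nat.card ↥(autS V) := by
  rw [← Nat.card_coe_set_eq]
  apply Nat.card_congr
  symm
  refine Equiv.ofBijective (fun π => ⟨fun x => ((π : Equiv.Perm ↥V) x : S), ?_⟩) ⟨?_, ?_⟩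
  · obtain ⟨s, hs, e⟩ := π.2
    exact ⟨s, hs, fun x => e x⟩
  · intro π₁ π₂ h
    have h2 := congrArg Subtype.val h
    refine Subtype.ext (Equiv.ext fun x => Subtype.ext ?_)
    exact congrFun h2 x
  · rintro ⟨g, s, hs, hg⟩
    have hmap : ∀ x ∈ V, s * x * s⁻¹ ∈ V := by
      intro x hx
      exact (Subgroup.mem_normalizer_iff.mp hs x).mp hx
    refine ⟨⟨conjPerm V s hs, ⟨s, hs, fun x => rfl⟩⟩, ?_⟩
    exact Subtype.ext (funext fun x => ((hg x).symm : _))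

end FusionSystem
namespace FusionSystem

variable {S : Type} [Group S] (F : FusionSystem S)

/-- The group of `F`-automorphisms of `V` that fix `W` pointwise and act trivially
on cosets of `W`. -/
noncomputable def kGroup [Finite S] (V W : Subgroup S) : Subgroup ↥(F.autF V) where
  carrier := {π | (∀ x : ↥V, (x : S) ∈ W → ((π : Equiv.Perm ↥V) x : S) = x) ∧
    ∀ x : ↥V, (x : S)⁻¹ * ((π : Equiv.Perm ↥V) x : S) ∈ W}
  one_mem' := by
    constructor
    · intro x _; rfl
    · intro x; simpa using W.one_mem
  mul_mem' := by
    rintro a b ⟨fa, ca⟩ ⟨fb, cb⟩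
    have happ : ∀ x : ↥V, ((a * b : ↥(F.autF V)) : Equiv.Perm ↥V) x =
        (a : Equiv.Perm ↥V) ((b : Equiv.Perm ↥V) x) := fun x => rfl
    constructor
    · intro x hx
      rw [happ]
      have hbx : (((b : Equiv.Perm ↥V) x : ↥V) : S) ∈ W := by rw [fb x hx]; exact hx
      rw [fa _ hbx, fb x hx]
    · intro x
      rw [happ]
      have := W.mul_mem (cb x) (ca ((b : Equiv.Perm ↥V) x))
      simpa [mul_assoc, mul_inv_cancel_left] using this
  inv_mem' := by
    rintro a ⟨fa, ca⟩
    have hinv : ((a⁻¹ : ↥(F.autF V)) : Equiv.Perm ↥V) = (a : Equiv.Perm ↥V)⁻¹ := rfl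
    constructor
    · intro x hx
      rw [hinv]
      have h1 : (a : Equiv.Perm ↥V) x = x := Subtype.ext (fa x hx)
      have h2 : (a : Equiv.Perm ↥V)⁻¹ x = x := by
        rw [Equiv.Perm.inv_eq_iff_eq]; exact h1.symm
      exact congrArg Subtype.val h2
    · intro x
      rw [hinv]
      have h2 := ca ((a : Equiv.Perm ↥V)⁻¹ x)
      rw [Equiv.Perm.apply_inv_self] at h2
      have := W.inv_mem h2
      simpa [mul_inv_rev] using this

lemma kpow_key [Finite S] {V W : Subgroup S} (hWV : W ≤ V) {π : Equiv.Perm ↥V}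
    (hπ : π ∈ F.autF V) (hfix : ∀ x : ↥V, (x : S) ∈ W → (π x : S) = x)
    (hcos : ∀ x : ↥V, (x : S)⁻¹ * (π x : S) ∈ W) :
    ∀ (n : ℕ) (x : ↥V), ((π ^ n) x : S) = x * ((x : S)⁻¹ * (π x : S)) ^ n := by
  obtain ⟨fg, hfg, eg⟩ := hπ
  intro n
  induction n with
  | zero => intro x; simp
  | succ n ih =>
    intro x
    set τ := (x : S)⁻¹ * (π x : S) with hτ
    have hτW : τ ∈ W := hcos x
    have hτnV : ∀ m : ℕ, τ ^ m ∈ V := fun m => hWV (W.pow_mem hτW m)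
    rw [pow_succ' π n]
    have h2 : (π * π ^ n) x = π ((π ^ n) x) := rfl
    rw [h2]
    have h3 : (((π ^ n) x : ↥V) : S) = (x : S) * τ ^ n := ih x
    have h4 : (π ((π ^ n) x) : S) = fg (((π ^ n) x : ↥V) : S) := eg _
    rw [h4, h3]
    have h5 : fg ((x : S) * τ ^ n) = fg (x : S) * fg (τ ^ n) :=
      F.mul_on hfg _ x.2 _ (hτnV n)
    rw [h5]
    have h6 : fg (τ ^ n) = τ ^ n := by
      have h7 : fg (τ ^ n) = (π (⟨τ ^ n, hτnV n⟩ : ↥V) : S) := (eg ⟨τ ^ n, hτnV n⟩).symm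
      rw [h7]
      exact hfix _ (W.pow_mem hτW n)
    have h8 : fg (x : S) = (x : S) * τ := by
      rw [← eg x, hτ, mul_inv_cancel_left]
    rw [h6, h8, pow_succ' τ n, mul_assoc]

lemma kGroup_pgroup [Finite S] {p : ℕ} (hp : p.Prime) (hS : IsPGroup p S)
    (V W : Subgroup S) (hWV : W ≤ V) : IsPGroup p ↥(F.kGroup V W) := by
  haveI := Fact.mk hp
  obtain ⟨k, hk⟩ := (hS.to_subgroup W).exists_card_eq
  intro g
  refine ⟨k, ?_⟩
  have key := F.kpow_key hWV ((g : ↥(F.autF V)).2) g.2.1 g.2.2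
  have hατ : ((g : ↥(F.autF V)) : Equiv.Perm ↥V) ^ (p ^ k) = 1 := by
    apply Equiv.ext
    intro x
    apply Subtype.ext
    rw [key]
    have hτW : ((x : S)⁻¹ * (((g : ↥(F.autF V)) : Equiv.Perm ↥V) x : S)) ∈ W := g.2.2 x
    have h9 : ((⟨_, hτW⟩ : ↥W) : S) ^ (p ^ k) = (((⟨_, hτW⟩ : ↥W) ^ (p ^ k) : ↥W) : S) := by
      rw [SubgroupClass.coe_pow]
    have h10 : ((⟨_, hτW⟩ : ↥W) ^ (p ^ k) : ↥W) = 1 := by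
      rw [← hk]; exact pow_card_eq_one'
    have h11 : ((x : S)⁻¹ * (((g : ↥(F.autF V)) : Equiv.Perm ↥V) x : S)) ^ (p ^ k) = 1 := by
      rw [show ((x : S)⁻¹ * (((g : ↥(F.autF V)) : Equiv.Perm ↥V) x : S))
        = ((⟨_, hτW⟩ : ↥W) : S) from rfl, h9, h10, OneMemClass.coe_one]
    rw [h11, mul_one]
    rfl
  apply Subtype.ext
  apply Subtype.ext
  calc (((g ^ (p ^ k) : ↥(F.kGroup V W)) : ↥(F.autF V)) : Equiv.Perm ↥V)
      = ((g : ↥(F.autF V)) : Equiv.Perm ↥V) ^ (p ^ k) := by push_cast; rfl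
    _ = 1 := hατ

end FusionSystem
namespace FusionSystem

variable {S : Type} [Group S] (F : FusionSystem S)

lemma ncl_fn [Finite S] {p : ℕ} (hp : p.Prime) (hS : IsPGroup p S) (hF : F.Saturated p)
    (V W : Subgroup S) (hfn : F.FullyNormalized V) (hWV : W ≤ V) (hWc : F.Centric W)
    (f : S → S) (hf : F.Mor V f) (hfix : ∀ w ∈ W, f w = w)
    (hcoset : ∀ v ∈ V, v⁻¹ * f v ∈ W) :
    ∃ w ∈ W, ∀ v ∈ V, f v = w * v * w⁻¹ := by
  haveI := Fact.mk hp
  have hmap : ∀ x ∈ V, f x ∈ V := by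
    intro x hx
    have h1 := V.mul_mem hx (hWV (hcoset x hx))
    rwa [mul_inv_cancel_left] at h1
  have hπG : F.morPerm hf hmap ∈ F.autF V := ⟨f, hf, fun x => rfl⟩
  have hgfK : (⟨F.morPerm hf hmap, hπG⟩ : ↥(F.autF V)) ∈ F.kGroup V W := by
    constructor
    · intro x hx; exact hfix _ hx
    · intro x; exact hcoset _ x.2
  set A' := (autS V).subgroupOf (F.autF V) with hA'def
  have hcardA' : Nat.card ↥A' = Nat.card ↥(autS V) :=
    Nat.card_congr (Subgroup.subgroupOfEquivOfLe (F.autS_le_autF V)).toEquiv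
  have hposA' : 0 < Nat.card ↥A' := Nat.card_pos
  have hindex : ¬ p ∣ A'.index := by
    have h1 := (hF.1 V hfn).2
    rw [F.card_autF V, card_autS V, ← hcardA'] at h1
    have h2 : Nat.card ↥(F.autF V) = Nat.card ↥A' * A'.index :=
      (Subgroup.card_mul_index A').symm
    rwa [h2, Nat.mul_div_cancel_left _ hposA'] at h1
  have hKp := F.kGroup_pgroup hp hS V W hWV
  obtain ⟨q, hq⟩ := hKp.nonempty_fixed_point_of_prime_not_dvd_card (↥(F.autF V) ⧸ A')
    (by rwa [← Subgroup.index_eq_card])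
  obtain ⟨χ, rfl⟩ := QuotientGroup.mk_surjective q
  have hconj : ∀ k : ↥(F.kGroup V W),
      χ⁻¹ * ((k : ↥(F.autF V))) * χ ∈ A' := by
    intro k
    have h1 := MulAction.mem_fixedPoints.mp hq k⁻¹
    have h2 : (((k⁻¹ : ↥(F.kGroup V W)) : ↥(F.autF V))) •
        (QuotientGroup.mk χ : ↥(F.autF V) ⧸ A') = QuotientGroup.mk χ := h1
    rw [MulAction.Quotient.smul_mk, smul_eq_mul] at h2
    have h3 := QuotientGroup.eq.mp h2
    have h4 : ((((k⁻¹ : ↥(F.kGroup V W)) : ↥(F.autF V))) * χ)⁻¹ * χ =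
        χ⁻¹ * ((k : ↥(F.autF V))) * χ := by
      push_cast
      group
    rwa [h4] at h3
  have hδA := Subgroup.mem_subgroupOf.mp
    (hconj ⟨(⟨F.morPerm hf hmap, hπG⟩ : ↥(F.autF V)), hgfK⟩)
  obtain ⟨s, hsN, hs⟩ := hδA
  have hδs : ∀ y : ↥V, ((χ.1⁻¹ ((F.morPerm hf hmap) (χ.1 y)) : ↥V) : S) =
      s * (y : S) * s⁻¹ := by
    intro y
    exact hs y
  obtain ⟨fχ, hfχ, eχ⟩ := χ.2
  have hinvmem : χ.1⁻¹ ∈ F.autF V := (F.autF V).inv_mem χ.2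
  obtain ⟨finv, hfinv, einv⟩ := hinvmem
  -- s centralizes the image of W under χ.1⁻¹
  have hcent : ∀ x : ↥V, (x : S) ∈ W → s * (χ.1⁻¹ x : S) * s⁻¹ = (χ.1⁻¹ x : S) := by
    intro x hx
    have h1 := (hδs (χ.1⁻¹ x)).symm
    rw [Equiv.Perm.apply_inv_self] at h1
    have h2 : (F.morPerm hf hmap) x = x := Subtype.ext (hfix (x : S) hx)
    rw [h2] at h1
    exact h1
  -- the subgroup χ.1⁻¹(W)
  have hfinvW : F.Mor W finv := F.restrict_mem W hWV hfinv
  have hW'c : F.Centric (F.morImage hfinvW) := F.centric_of_isConj hWc ⟨finv, hfinvW, rfl⟩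
  have hW'V : ((F.morImage hfinvW : Subgroup S) : Set S) ⊆ (V : Set S) := by
    rintro _ ⟨w, hw, rfl⟩
    rw [← einv ⟨w, hWV hw⟩]
    exact (χ.1⁻¹ ⟨w, hWV hw⟩).2
  have hsC : s ∈ Subgroup.centralizer ((F.morImage hfinvW : Subgroup S) : Set S) := by
    rw [Subgroup.mem_centralizer_iff]
    rintro _ ⟨w, hw, rfl⟩
    have h3 := hcent ⟨w, hWV hw⟩ hw
    rw [einv ⟨w, hWV hw⟩] at h3
    have h4 := congrArg (· * s) h3
    simpa [mul_assoc] using h4.symm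
  have hsW' : s ∈ F.morImage hfinvW := F.centric_self_subset hW'c hsC
  have hsV : s ∈ V := hW'V hsW'
  obtain ⟨w₀, hw₀W, hw₀⟩ : ∃ w₀ ∈ W, finv w₀ = s := hsW'
  have hcs : χ.1⁻¹ (⟨w₀, hWV hw₀W⟩ : ↥V) = ⟨s, hsV⟩ := Subtype.ext (by
    rw [einv ⟨w₀, hWV hw₀W⟩]; exact hw₀)
  have hcsw : (χ.1 (⟨s, hsV⟩ : ↥V) : S) = w₀ := by
    rw [← hcs, Equiv.Perm.apply_inv_self]
  refine ⟨w₀, hw₀W, fun v hv => ?_⟩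
  have h5 : f v = ((F.morPerm hf hmap) (⟨v, hv⟩ : ↥V) : S) := rfl
  have h6 : (F.morPerm hf hmap) (⟨v, hv⟩ : ↥V) =
      χ.1 (χ.1⁻¹ ((F.morPerm hf hmap) (χ.1 (χ.1⁻¹ ⟨v, hv⟩)))) := by
    rw [Equiv.Perm.apply_inv_self, Equiv.Perm.apply_inv_self]
  have h7 : (χ.1 (χ.1⁻¹ ((F.morPerm hf hmap) (χ.1 (χ.1⁻¹ ⟨v, hv⟩)))) : S) =
      fχ ((χ.1⁻¹ ((F.morPerm hf hmap) (χ.1 (χ.1⁻¹ ⟨v, hv⟩))) : ↥V) : S) := eχ _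
  have h8 := hδs (χ.1⁻¹ ⟨v, hv⟩)
  have hyV : ((χ.1⁻¹ (⟨v, hv⟩ : ↥V) : ↥V) : S) ∈ V := (χ.1⁻¹ ⟨v, hv⟩).2
  have h9 : fχ (s * ((χ.1⁻¹ (⟨v, hv⟩ : ↥V) : ↥V) : S) * s⁻¹) =
      fχ s * fχ ((χ.1⁻¹ (⟨v, hv⟩ : ↥V) : ↥V) : S) * (fχ s)⁻¹ := by
    rw [F.mul_on hfχ _ (V.mul_mem hsV hyV) _ (V.inv_mem hsV),
      F.mul_on hfχ _ hsV _ hyV, F.mor_inv hfχ hsV]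
  have h10 : fχ s = w₀ := by
    have := eχ (⟨s, hsV⟩ : ↥V)
    rw [hcsw] at this
    exact this.symm
  have h11 : fχ ((χ.1⁻¹ (⟨v, hv⟩ : ↥V) : ↥V) : S) = v := by
    have := eχ (χ.1⁻¹ (⟨v, hv⟩ : ↥V))
    rw [Equiv.Perm.apply_inv_self] at this
    exact this.symm
  rw [h5, h6, h7, h8, h9, h10, h11]

end FusionSystem
namespace FusionSystem

variable {S : Type} [Group S] (F : FusionSystem S)

lemma ncl [Finite S] {p : ℕ} (hp : p.Prime) (hS : IsPGroup p S) (hF : F.Saturated p)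
    (T U : Subgroup S) (hTc : F.Centric T) (hTU : T ≤ U) (hUN : U ≤ (Subgroup.normalizer (T : Set S)))
    (γ : S → S) (hγ : F.Mor U γ) (hid : ∀ t ∈ T, γ t = t) :
    ∃ z ∈ T, ∀ u ∈ U, γ u = z * u * z⁻¹ := by
  -- (i) γ(u) ∈ u·T
  have hcos : ∀ u ∈ U, u⁻¹ * γ u ∈ T := by
    intro u hu
    have hC : u⁻¹ * γ u ∈ Subgroup.centralizer (T : Set S) := by
      rw [Subgroup.mem_centralizer_iff]
      intro t ht
      have htU : t ∈ U := hTU ht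
      have hconj : u * t * u⁻¹ ∈ T := (Subgroup.mem_normalizer_iff.mp (hUN hu) t).mp ht
      have h1 : γ (u * t * u⁻¹) = u * t * u⁻¹ := hid _ hconj
      have h2 : γ (u * t * u⁻¹) = γ u * t * (γ u)⁻¹ := by
        rw [F.mul_on hγ _ (U.mul_mem hu htU) _ (U.inv_mem hu),
          F.mul_on hγ _ hu _ htU, F.mor_inv hγ hu, hid t ht]
      -- u t u⁻¹ = γu t (γu)⁻¹  ⟹  t * (u⁻¹ γ u) = (u⁻¹ γ u) * t
      have h3 : u * t * u⁻¹ = γ u * t * (γ u)⁻¹ := by rw [← h1, h2]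
      have h4 := congrArg (fun w => u⁻¹ * w * γ u) h3
      simp only [mul_assoc, inv_mul_cancel_left] at h4 ⊢
      simpa [mul_assoc] using h4
    exact hTc T (F.isConj_refl T) hC
  have hγU : ∀ u ∈ U, γ u ∈ U := by
    intro u hu
    have h1 := U.mul_mem hu (hTU (hcos u hu))
    rwa [mul_inv_cancel_left] at h1
  -- fully normalized conjugate of U
  obtain ⟨V, β, hβ, hβim, hVfn⟩ := F.exists_fn_conj U
  obtain ⟨β', hβ', hβ'β⟩ := F.inv_mem V hβ hβim.symm
  have hββ' : ∀ y ∈ V, β (β' y) = y := by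
    intro y hy
    have hy' : y ∈ β '' (U : Set S) := by rw [hβim]; exact hy
    obtain ⟨x, hx, rfl⟩ := hy'
    rw [hβ'β x hx]
  have hβ'mem : ∀ y ∈ V, β' y ∈ U := by
    intro y hy
    have hy' : y ∈ β '' (U : Set S) := by rw [hβim]; exact hy
    obtain ⟨x, hx, rfl⟩ := hy'
    rw [hβ'β x hx]; exact hx
  have hβmem : ∀ x ∈ U, β x ∈ V := by
    intro x hx
    have : β x ∈ β '' (U : Set S) := ⟨x, hx, rfl⟩
    rw [hβim] at this; exact this
  -- W := β(T)
  have hβT : F.Mor T β := F.restrict_mem T hTU hβ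
  have hWc : F.Centric (F.morImage hβT) := F.centric_of_isConj hTc ⟨β, hβT, rfl⟩
  have hWV : F.morImage hβT ≤ V := by
    rintro _ ⟨t, ht, rfl⟩
    exact hβmem t (hTU ht)
  -- f* := β ∘ γ ∘ β'
  have hγβ' : F.Mor V (γ ∘ β') := F.comp_mem hβ' hγ hβ'mem
  have hfst : F.Mor V (β ∘ (γ ∘ β')) :=
    F.comp_mem hγβ' hβ (fun y hy => hγU _ (hβ'mem y hy))
  have hfix : ∀ w ∈ F.morImage hβT, (β ∘ (γ ∘ β')) w = w := by
    rintro _ ⟨t, ht, rfl⟩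
    show β (γ (β' (β t))) = β t
    rw [hβ'β t (hTU ht), hid t ht]
  have hcoset : ∀ v ∈ V, v⁻¹ * (β ∘ (γ ∘ β')) v ∈ F.morImage hβT := by
    intro v hv
    have hv' : v ∈ β '' (U : Set S) := by rw [hβim]; exact hv
    obtain ⟨u, hu, rfl⟩ := hv'
    show (β u)⁻¹ * β (γ (β' (β u))) ∈ F.morImage hβT
    rw [hβ'β u hu, ← F.mor_inv hβ hu, ← F.mul_on hβ _ (U.inv_mem hu) _ (hγU u hu)]
    exact ⟨u⁻¹ * γ u, hcos u hu, rfl⟩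
  obtain ⟨w, hwW, hw⟩ := F.ncl_fn hp hS hF V (F.morImage hβT) hVfn hWV hWc _ hfst hfix hcoset
  obtain ⟨t₀, ht₀, rfl⟩ := hwW
  refine ⟨t₀, ht₀, fun u hu => ?_⟩
  have h1 := hw (β u) (hβmem u hu)
  have h2 : β (γ (β' (β u))) = β t₀ * β u * (β t₀)⁻¹ := h1
  rw [hβ'β u hu] at h2
  have ht₀U : t₀ ∈ U := hTU ht₀
  have h3 : β t₀ * β u * (β t₀)⁻¹ = β (t₀ * u * t₀⁻¹) := by
    rw [F.mul_on hβ _ (U.mul_mem ht₀U hu) _ (U.inv_mem ht₀U),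
      F.mul_on hβ _ ht₀U _ hu, F.mor_inv hβ ht₀U]
  rw [h3] at h2
  exact F.inj_on hβ (hγU u hu) (U.mul_mem (U.mul_mem ht₀U hu) (U.inv_mem ht₀U)) h2

/-- The key "epi" lemma: a morphism restricting to the identity on a centric subgroup
is conjugation by an element of that subgroup. -/
lemma core [Finite S] {p : ℕ} (hp : p.Prime) (hS : IsPGroup p S) (hF : F.Saturated p)
    (R : Subgroup S) :
    ∀ (n : ℕ) (T : Subgroup S) (γ : S → S), Nat.card ↥R ≤ Nat.card ↥T + n →
      F.Centric T → T ≤ R → F.Mor R γ → (∀ t ∈ T, γ t = t) →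
      ∃ z ∈ T, ∀ r ∈ R, γ r = z * r * z⁻¹ := by
  intro n
  induction n with
  | zero =>
    intro T γ hcard hTc hTR hγ hid
    have hTR' : T = R := by
      rcases eq_or_lt_of_le hTR with h | h
      · exact h
      · exact absurd (card_lt_of_lt h) (by omega)
    subst hTR'
    exact ⟨1, T.one_mem, fun r hr => by rw [hid r hr]; group⟩
  | succ n ih =>
    intro T γ hcard hTc hTR hγ hid
    rcases eq_or_lt_of_le hTR with h | h
    · subst h
      exact ⟨1, T.one_mem, fun r hr => by rw [hid r hr]; group⟩
    · have hU := lt_inf_normalizer hp hS h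
      set U := R ⊓ (Subgroup.normalizer (T : Set S)) with hUdef
      have hUR : U ≤ R := inf_le_left
      have hUN : U ≤ (Subgroup.normalizer (T : Set S)) := inf_le_right
      have hTU : T ≤ U := hU.le
      obtain ⟨z₁, hz₁T, hz₁⟩ := F.ncl hp hS hF T U hTc hTU hUN γ
        (F.restrict_mem U hUR hγ) hid
      have hγ' : F.Mor R (fun x => z₁⁻¹ * γ x * z₁) := by
        have h1 := F.comp_mem hγ (F.conj_mem ⊤ z₁⁻¹) (fun x _ => Subgroup.mem_top _)
        simpa [Function.comp_def] using h1
      have hid' : ∀ u ∈ U, z₁⁻¹ * γ u * z₁ = u := by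
        intro u hu
        rw [hz₁ u hu]
        group
      have hcard' : Nat.card ↥R ≤ Nat.card ↥U + n := by
        have := card_lt_of_lt hU
        omega
      have hUc : F.Centric U := F.centric_mono hTc hTU
      obtain ⟨z₂, hz₂U, hz₂⟩ := ih U (fun x => z₁⁻¹ * γ x * z₁) hcard' hUc hUR hγ' hid'
      have hz₂T : z₂ ∈ T := by
        apply hTc T (F.isConj_refl T)
        rw [SetLike.mem_coe, Subgroup.mem_centralizer_iff]
        intro t ht
        have h1 := hz₂ t (hTR ht)
        have h2 : z₁⁻¹ * γ t * z₁ = t := hid' t (hTU ht)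
        rw [h2] at h1
        -- t = z₂ * t * z₂⁻¹ ⟹ t * z₂ = z₂ * t
        have h3 := congrArg (· * z₂) h1
        simpa [mul_assoc] using h3
      refine ⟨z₁ * z₂, T.mul_mem hz₁T hz₂T, fun r hr => ?_⟩
      have h1 := hz₂ r hr
      have h2 : γ r = z₁ * (z₁⁻¹ * γ r * z₁) * z₁⁻¹ := by group
      rw [h2, h1]
      group

/-- Packaged version of `core` without the numeric bound. -/
lemma core' [Finite S] {p : ℕ} (hp : p.Prime) (hS : IsPGroup p S) (hF : F.Saturated p)
    {T R : Subgroup S} (hTc : F.Centric T) (hTR : T ≤ R) {γ : S → S} (hγ : F.Mor R γ)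
    (hid : ∀ t ∈ T, γ t = t) : ∃ z ∈ T, ∀ r ∈ R, γ r = z * r * z⁻¹ :=
  F.core hp hS hF R (Nat.card ↥R) T γ (Nat.le_add_left _ _) hTc hTR hγ hid

end FusionSystem
namespace FusionSystem

variable {S : Type} [Group S] (F : FusionSystem S)

lemma main_aux [Finite S] {p : ℕ} (hp : p.Prime) (hS : IsPGroup p S) (hF : F.Saturated p)
    (P : Subgroup S) (hP : F.Centric P) (φ : S → S) (hφ : F.Mor P φ) :
    ∀ (n : ℕ) (Q₁ Q₂ : Subgroup S) (ψ₁ ψ₂ : S → S), P ≤ Q₁ → P ≤ Q₂ →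
      (∀ x ∈ P, ψ₁ x = φ x) → (∀ x ∈ P, ψ₂ x = φ x) →
      F.Nonextendable Q₁ ψ₁ → F.Nonextendable Q₂ ψ₂ →
      Nat.card S ≤ Nat.card ↥(Q₁ ⊓ Q₂) + n →
      Q₁ = Q₂ ∧ ∃ z ∈ P, ∀ x ∈ Q₁, ψ₂ x = ψ₁ (z * x * z⁻¹) := by
  intro n
  induction n using Nat.strong_induction_on with
  | _ n ih =>
  intro Q₁ Q₂ ψ₁ ψ₂ hPQ₁ hPQ₂ he₁ he₂ hn₁ hn₂ hcard
  set D := Q₁ ⊓ Q₂ with hDdef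
  have hDQ₁le : D ≤ Q₁ := inf_le_left
  have hDQ₂le : D ≤ Q₂ := inf_le_right
  have hPD : P ≤ D := le_inf hPQ₁ hPQ₂
  have hψ₁D : F.Mor D ψ₁ := F.restrict_mem D hDQ₁le hn₁.1
  have hψ₂D : F.Mor D ψ₂ := F.restrict_mem D hDQ₂le hn₂.1
  have hψ₁P : F.Mor P ψ₁ := F.restrict_mem P hPQ₁ hn₁.1
  -- P' = ψ₁(P), T = ψ₁(D)
  have hP'c : F.Centric (F.morImage hψ₁P) := F.centric_of_isConj hP ⟨ψ₁, hψ₁P, rfl⟩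
  have hP'T : F.morImage hψ₁P ≤ F.morImage hψ₁D := by
    rintro _ ⟨x, hx, rfl⟩
    exact ⟨x, hPD hx, rfl⟩
  obtain ⟨g, hg, hgψ⟩ := F.inv_mem (F.morImage hψ₁D) hψ₁D rfl
  have hγ : F.Mor (F.morImage hψ₁D) (ψ₂ ∘ g) := by
    refine F.comp_mem hg hn₂.1 ?_
    rintro _ ⟨x, hx, rfl⟩
    rw [hgψ x hx]
    exact hDQ₂le hx
  have hγid : ∀ y ∈ F.morImage hψ₁P, (ψ₂ ∘ g) y = y := by
    rintro _ ⟨x, hx, rfl⟩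
    show ψ₂ (g (ψ₁ x)) = ψ₁ x
    rw [hgψ x (hPD hx), he₂ x hx, he₁ x hx]
  obtain ⟨z', hz'P', hz'⟩ := F.core' hp hS hF hP'c hP'T hγ hγid
  obtain ⟨z, hzP, rfl⟩ := hz'P'
  -- the key identity on D
  have hzQ₁ : z ∈ Q₁ := hPQ₁ hzP
  have hkey : ∀ d ∈ D, ψ₂ d = ψ₁ (z * d * z⁻¹) := by
    intro d hd
    have h1 : ψ₂ d = (ψ₂ ∘ g) (ψ₁ d) := by
      show ψ₂ d = ψ₂ (g (ψ₁ d))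
      rw [hgψ d hd]
    have h2 := hz' (ψ₁ d) ⟨d, hd, rfl⟩
    have hdQ₁ : d ∈ Q₁ := hDQ₁le hd
    have h3 : ψ₁ (z * d * z⁻¹) = ψ₁ z * ψ₁ d * (ψ₁ z)⁻¹ := by
      rw [F.mul_on hn₁.1 _ (Q₁.mul_mem hzQ₁ hdQ₁) _ (Q₁.inv_mem hzQ₁),
        F.mul_on hn₁.1 _ hzQ₁ _ hdQ₁, F.mor_inv hn₁.1 hzQ₁]
    rw [h1, h2, h3]
  by_cases hDQ₂ : D = Q₂
  · -- Q₂ ≤ Q₁ : extend ψ₂ to Q₁ by ψ₁ ∘ c_z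
    have hQ₂Q₁ : Q₂ ≤ Q₁ := hDQ₂ ▸ hDQ₁le
    have hg₂ : F.Mor Q₁ (fun x => ψ₁ (z * x * z⁻¹)) := by
      have h1 := F.comp_mem (F.conj_mem Q₁ z) hn₁.1 (fun x hx =>
        Q₁.mul_mem (Q₁.mul_mem hzQ₁ hx) (Q₁.inv_mem hzQ₁))
      simpa [Function.comp_def] using h1
    have hagree : ∀ x ∈ Q₂, (fun x => ψ₁ (z * x * z⁻¹)) x = ψ₂ x := by
      intro x hx
      exact (hkey x (hDQ₂ ▸ hx)).symm
    have hQ : Q₁ = Q₂ := hn₂.2 Q₁ _ hQ₂Q₁ hg₂ hagree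
    refine ⟨hQ, z, hzP, fun x hx => hkey x ?_⟩
    rw [hDdef, hQ, inf_idem]
    rw [hQ] at hx
    exact hx
  · by_cases hDQ₁ : D = Q₁
    · -- Q₁ ≤ Q₂ : extend ψ₁ to Q₂ by ψ₂ ∘ c_{z⁻¹}
      have hQ₁Q₂ : Q₁ ≤ Q₂ := hDQ₁ ▸ hDQ₂le
      have hzQ₂ : z ∈ Q₂ := hPQ₂ hzP
      have hg₁ : F.Mor Q₂ (fun x => ψ₂ (z⁻¹ * x * z)) := by
        have h1 := F.comp_mem (F.conj_mem Q₂ z⁻¹) hn₂.1 (fun x hx => by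
          have := Q₂.mul_mem (Q₂.mul_mem (Q₂.inv_mem hzQ₂) hx) (Q₂.inv_mem (Q₂.inv_mem hzQ₂))
          simpa using this)
        simpa [Function.comp_def] using h1
      have hagree : ∀ x ∈ Q₁, (fun x => ψ₂ (z⁻¹ * x * z)) x = ψ₁ x := by
        intro x hx
        have hxD : x ∈ D := hDQ₁ ▸ hx
        have hzD : z ∈ D := hPD hzP
        have hmem : z⁻¹ * x * z ∈ D := D.mul_mem (D.mul_mem (D.inv_mem hzD) hxD) hzD
        show ψ₂ (z⁻¹ * x * z) = ψ₁ x
        rw [hkey _ hmem]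
        congr 1
        group
      have hQ : Q₂ = Q₁ := hn₁.2 Q₂ _ hQ₁Q₂ hg₁ hagree
      refine ⟨hQ.symm, z, hzP, fun x hx => hkey x (hDQ₁ ▸ hx)⟩
    · -- both strict : contradiction via the inductive hypothesis
      exfalso
      have hlt₁ : D < Q₁ := lt_of_le_of_ne hDQ₁le hDQ₁
      have hlt₂ : D < Q₂ := lt_of_le_of_ne hDQ₂le hDQ₂
      have hN₁ : D < Q₁ ⊓ (Subgroup.normalizer (D : Set S)) := lt_inf_normalizer hp hS hlt₁
      have hN₂ : D < Q₂ ⊓ (Subgroup.normalizer (D : Set S)) := lt_inf_normalizer hp hS hlt₂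
      obtain ⟨R, g', hg', hDR, hagree', hRset⟩ := F.ext_axiom hF hP hPD hψ₂D
      have hN₂R : Q₂ ⊓ (Subgroup.normalizer (D : Set S)) ≤ R := by
        rintro x ⟨hxQ₂, hxN⟩
        have : x ∈ (R : Set S) := by
          rw [hRset]
          refine ⟨hxN, ψ₂ x, fun q hq => ?_⟩
          have hqQ₂ : q ∈ Q₂ := hDQ₂le hq
          rw [F.mul_on hn₂.1 _ (Q₂.mul_mem hxQ₂ hqQ₂) _ (Q₂.inv_mem hxQ₂),
            F.mul_on hn₂.1 _ hxQ₂ _ hqQ₂, F.mor_inv hn₂.1 hxQ₂]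
        exact this
      have hN₁R : Q₁ ⊓ (Subgroup.normalizer (D : Set S)) ≤ R := by
        rintro x ⟨hxQ₁, hxN⟩
        have : x ∈ (R : Set S) := by
          rw [hRset]
          refine ⟨hxN, ψ₁ (z * x * z⁻¹), fun q hq => ?_⟩
          have hqD : x * q * x⁻¹ ∈ D := (Subgroup.mem_normalizer_iff.mp hxN q).mp hq
          rw [hkey _ hqD, hkey _ hq]
          have hqQ₁ : q ∈ Q₁ := hDQ₁le hq
          have m1 : z * x * z⁻¹ ∈ Q₁ := Q₁.mul_mem (Q₁.mul_mem hzQ₁ hxQ₁) (Q₁.inv_mem hzQ₁)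
          have m2 : z * q * z⁻¹ ∈ Q₁ := Q₁.mul_mem (Q₁.mul_mem hzQ₁ hqQ₁) (Q₁.inv_mem hzQ₁)
          have e1 : ψ₁ (z * (x * q * x⁻¹) * z⁻¹) =
              ψ₁ ((z * x * z⁻¹) * (z * q * z⁻¹) * (z * x * z⁻¹)⁻¹) := by
            congr 1
            group
          rw [e1, F.mul_on hn₁.1 _ (Q₁.mul_mem m1 m2) _ (Q₁.inv_mem m1),
            F.mul_on hn₁.1 _ m1 _ m2, F.mor_inv hn₁.1 m1]
        exact this
      obtain ⟨Qh, gh, hRQh, hghagree, hngh⟩ := F.exists_nonext R g' hg'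
      have hPQh : P ≤ Qh := le_trans (le_trans hPD hDR) hRQh
      have heh : ∀ x ∈ P, gh x = φ x := by
        intro x hx
        rw [hghagree x (hDR (hPD hx)), hagree' x (hPD hx)]
        exact he₂ x hx
      -- n must be positive
      have hDS : Nat.card ↥D < Nat.card S := by
        have h1 : D < ⊤ := lt_of_lt_of_le hlt₁ le_top
        have := card_lt_of_lt h1
        rwa [Subgroup.card_top] at this
      have hn0 : n ≠ 0 := by omega
      -- first application : Q₂ = Qh
      have hQ₂Qh : Q₂ = Qh := by
        have hle : Q₂ ⊓ (Subgroup.normalizer (D : Set S)) ≤ Q₂ ⊓ Qh :=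
          le_inf inf_le_left (le_trans hN₂R hRQh)
        have hcard2 : Nat.card S ≤ Nat.card ↥(Q₂ ⊓ Qh) + (n - 1) := by
          have h1 := card_lt_of_lt hN₂
          have h2 := Subgroup.card_le_of_le hle
          omega
        exact (ih (n - 1) (by omega) Q₂ Qh ψ₂ gh hPQ₂ hPQh he₂ heh hn₂ hngh hcard2).1
      -- second application : Q₁ = Qh
      have hQ₁Qh : Q₁ = Qh := by
        have hle : Q₁ ⊓ (Subgroup.normalizer (D : Set S)) ≤ Q₁ ⊓ Qh :=
          le_inf inf_le_left (le_trans hN₁R hRQh)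
        have hcard2 : Nat.card S ≤ Nat.card ↥(Q₁ ⊓ Qh) + (n - 1) := by
          have h1 := card_lt_of_lt hN₁
          have h2 := Subgroup.card_le_of_le hle
          omega
        exact (ih (n - 1) (by omega) Q₁ Qh ψ₁ gh hPQ₁ hPQh he₁ heh hn₁ hngh hcard2).1
      apply hDQ₁
      rw [hDdef, hQ₁Qh, hQ₂Qh, inf_idem]

end FusionSystem




/-- In a saturated fusion system `F` on a finite `p`-group `S`, every
`F`-morphism `φ : P → S` with `P` `F`-centric has a nonextendable extension that is unique up
to precomposition with conjugation by an element of `Z(P)`: if `ψ₁ : Q₁ → S`, `ψ₂ : Q₂ → S`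
are nonextendable extensions of `φ`, then `Q₁ = Q₂` and `ψ₂ = ψ₁ ∘ c_z` with `z ∈ Z(P)`. -/
theorem stmt16 (p : ℕ) (hp : p.Prime) (S : Type) [Group S] [Fintype S]
    (hS : IsPGroup p S) (F : FusionSystem S) (hF : F.Saturated p)
    (P : Subgroup S) (hP : F.Centric P) (φ : S → S) (hφ : F.Mor P φ)
    (Q₁ Q₂ : Subgroup S) (ψ₁ ψ₂ : S → S)
    (hPQ₁ : P ≤ Q₁) (hPQ₂ : P ≤ Q₂)
    (he₁ : ∀ x ∈ P, ψ₁ x = φ x) (he₂ : ∀ x ∈ P, ψ₂ x = φ x)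
    (hn₁ : F.Nonextendable Q₁ ψ₁) (hn₂ : F.Nonextendable Q₂ ψ₂) :
    Q₁ = Q₂ ∧ ∃ z ∈ P, (∀ x ∈ P, z * x = x * z) ∧ ∀ x ∈ Q₁, ψ₂ x = ψ₁ (z * x * z⁻¹) := by
  obtain ⟨hQ, z, hzP, hzψ⟩ := F.main_aux hp hS hF P hP φ hφ (Nat.card S) Q₁ Q₂ ψ₁ ψ₂
    hPQ₁ hPQ₂ he₁ he₂ hn₁ hn₂ (Nat.le_add_left _ _)
  refine ⟨hQ, z, hzP, ?_, hzψ⟩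
  intro x hx
  have h1 := hzψ x (hPQ₁ hx)
  have h2 : ψ₂ x = ψ₁ x := by rw [he₂ x hx, he₁ x hx]
  have hzQ₁ : z ∈ Q₁ := hPQ₁ hzP
  have hxQ₁ : x ∈ Q₁ := hPQ₁ hx
  have h3 : ψ₁ (z * x * z⁻¹) = ψ₁ x := by rw [← h1, h2]
  have h4 : z * x * z⁻¹ = x := F.inj_on hn₁.1
    (Q₁.mul_mem (Q₁.mul_mem hzQ₁ hxQ₁) (Q₁.inv_mem hzQ₁)) hxQ₁ h3
  have h5 := congrArg (· * z) h4
  simpa [mul_assoc] using h5
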